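/- arXiv:2603.07149 — 2 statements merged into one kernel-verified Lean document; each statement's English description precedes it below -/
import Mathlib

section
/- Let C* > 0 and D ∈ ℝ. There exists a constant K > 0, depending only on C* and D and independent of time, such that for all real numbers r₁, r₂, t with t ≥ max(r₁, r₂) ≥ 1, one has ∫_{max(r₁,r₂)}^{t} u^D · e^{−C*(u−r₁)} · e^{−C*(u−r₂)} du ≤ K · (max(r₁,r₂))^D · e^{−C*(max(r₁,r₂) − min(r₁,r₂))}. -/
open Real intervalIntegral

/-- pointwise bound: `u^D ≤ m^D (1+(u-m))^N` for `1 ≤ m ≤ u`, `D ≤ N`. -/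
lemma aux_rpow_bound (D : ℝ) (N : ℕ) (hDN : D ≤ N) {m u : ℝ} (hm : 1 ≤ m) (hu : m ≤ u) :
    u ^ D ≤ m ^ D * (1 + (u - m)) ^ N := by
  have hm0 : (0:ℝ) < m := lt_of_lt_of_le one_pos hm
  have hx : (0:ℝ) ≤ u - m := by linarith
  have h1x : (1:ℝ) ≤ 1 + (u - m) := by linarith
  rcases le_or_gt 0 D with hD | hD
  · have hle : u ≤ m * (1 + (u - m)) := by nlinarith
    calc u ^ D ≤ (m * (1 + (u - m))) ^ D :=
          Real.rpow_le_rpow (by linarith) hle hD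
      _ = m ^ D * (1 + (u - m)) ^ D := Real.mul_rpow hm0.le (by linarith)
      _ ≤ m ^ D * (1 + (u - m)) ^ (N : ℝ) := by
          have := Real.rpow_le_rpow_of_exponent_le h1x hDN
          have hpos : (0:ℝ) ≤ m ^ D := (Real.rpow_pos_of_pos hm0 D).le
          exact mul_le_mul_of_nonneg_left this hpos
      _ = m ^ D * (1 + (u - m)) ^ N := by rw [Real.rpow_natCast]
  · calc u ^ D ≤ m ^ D := Real.rpow_le_rpow_of_nonpos hm0 hu hD.le
      _ ≤ m ^ D * (1 + (u - m)) ^ N := by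
          have : (1:ℝ) ≤ (1 + (u - m)) ^ N := one_le_pow₀ h1x
          nlinarith [(Real.rpow_pos_of_pos hm0 D).le]

/-- `(1+x)^N ≤ N! (2/C)^N e^{C/2} e^{(C/2)x}` for `x ≥ 0`, `C > 0`. -/
lemma aux_poly_exp (Cstar : ℝ) (hC : 0 < Cstar) (N : ℕ) {x : ℝ} (hx : 0 ≤ x) :
    (1 + x) ^ N ≤ (N.factorial : ℝ) * (2 / Cstar) ^ N * Real.exp (Cstar / 2) *
      Real.exp (Cstar / 2 * x) := by
  have h1 : ((Cstar / 2) * (1 + x)) ^ N / (N.factorial : ℝ) ≤ Real.exp ((Cstar / 2) * (1 + x)) :=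
    Real.pow_div_factorial_le_exp _ (show (0:ℝ) ≤ (Cstar / 2) * (1 + x) by positivity) N
  have hfac : (0:ℝ) < (N.factorial : ℝ) := by exact_mod_cast N.factorial_pos
  have heq : (1 + x) ^ N = ((Cstar / 2) * (1 + x)) ^ N * (2 / Cstar) ^ N := by
    rw [← mul_pow]
    congr 1
    field_simp
  have hexp : Real.exp ((Cstar / 2) * (1 + x)) = Real.exp (Cstar / 2) * Real.exp (Cstar / 2 * x) := by
    rw [← Real.exp_add]; ring_nf
  have h2 : ((Cstar / 2) * (1 + x)) ^ N ≤ (N.factorial : ℝ) * Real.exp ((Cstar / 2) * (1 + x)) := by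
    rw [div_le_iff₀ hfac] at h1; linarith [h1]
  calc (1 + x) ^ N = ((Cstar / 2) * (1 + x)) ^ N * (2 / Cstar) ^ N := heq
    _ ≤ ((N.factorial : ℝ) * Real.exp ((Cstar / 2) * (1 + x))) * (2 / Cstar) ^ N := by
        apply mul_le_mul_of_nonneg_right h2; positivity
    _ = (N.factorial : ℝ) * (2 / Cstar) ^ N * Real.exp (Cstar / 2) * Real.exp (Cstar / 2 * x) := by
        rw [hexp]; ring

/-- Lemma 5.8: integral estimate with exponential decay.
For `C* > 0` and `D ∈ ℝ` there is a time-independent constant `K > 0` such that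
for all `r₁ r₂ t` with `t ≥ max r₁ r₂ ≥ 1`,
`∫_{max(r₁,r₂)}^t u^D e^{-C*(u-r₁)} e^{-C*(u-r₂)} du
  ≤ K (max r₁ r₂)^D e^{-C*(max r₁ r₂ - min r₁ r₂)}`. -/
theorem stmt_0 (Cstar D : ℝ) (hC : 0 < Cstar) :
    ∃ K : ℝ, 0 < K ∧ ∀ r₁ r₂ t : ℝ, 1 ≤ max r₁ r₂ → max r₁ r₂ ≤ t →
      (∫ u in (max r₁ r₂)..t,
          u ^ D * Real.exp (-Cstar * (u - r₁)) * Real.exp (-Cstar * (u - r₂)))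
        ≤ K * (max r₁ r₂) ^ D * Real.exp (-Cstar * (max r₁ r₂ - min r₁ r₂)) := by
  set N : ℕ := ⌈D⌉₊ with hN
  set A : ℝ := (N.factorial : ℝ) * (2 / Cstar) ^ N * Real.exp (Cstar / 2) with hA
  have hApos : 0 < A := by positivity
  refine ⟨A * (2 / Cstar), by positivity, ?_⟩
  intro r₁ r₂ t hm1 hmt
  set m : ℝ := max r₁ r₂ with hmdef
  set n : ℝ := min r₁ r₂ with hndef
  have hm0 : (0:ℝ) < m := lt_of_lt_of_le one_pos hm1
  have hmn : n ≤ m := min_le_max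
  have hsum : m + n = r₁ + r₂ := max_add_min r₁ r₂
  have hmD : (0:ℝ) < m ^ D := Real.rpow_pos_of_pos hm0 D
  -- the dominating function
  set g : ℝ → ℝ := fun u => A * m ^ D * Real.exp (-Cstar * (m - n)) *
    Real.exp (-(Cstar / 2) * (u - m)) with hg
  -- pointwise bound on [m, t]
  have key : ∀ u ∈ Set.Icc m t,
      u ^ D * Real.exp (-Cstar * (u - r₁)) * Real.exp (-Cstar * (u - r₂)) ≤ g u := by
    intro u hu
    obtain ⟨hum, hut⟩ := hu
    have hx : (0:ℝ) ≤ u - m := by linarith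
    -- product of exponentials rewritten via m, n
    have e1 : Real.exp (-Cstar * (u - r₁)) * Real.exp (-Cstar * (u - r₂))
        = Real.exp (-Cstar * (u - m)) * Real.exp (-Cstar * (u - n)) := by
      rw [← Real.exp_add, ← Real.exp_add]
      congr 1
      nlinarith [hsum]
    have e2 : Real.exp (-Cstar * (u - n)) ≤ Real.exp (-Cstar * (m - n)) := by
      apply Real.exp_le_exp.2; nlinarith
    have e3 : u ^ D ≤ m ^ D * (1 + (u - m)) ^ N :=
      aux_rpow_bound D N (le_trans (Nat.le_ceil D) (by rw [hN])) hm1 hum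
    have e4 : (1 + (u - m)) ^ N ≤ A * Real.exp (Cstar / 2 * (u - m)) := by
      have := aux_poly_exp Cstar hC N hx
      rw [hA]; linarith
    have e5 : Real.exp (Cstar / 2 * (u - m)) * Real.exp (-Cstar * (u - m))
        = Real.exp (-(Cstar / 2) * (u - m)) := by
      rw [← Real.exp_add]; ring_nf
    have hexp_pos : (0:ℝ) < Real.exp (-Cstar * (u - m)) := Real.exp_pos _
    calc u ^ D * Real.exp (-Cstar * (u - r₁)) * Real.exp (-Cstar * (u - r₂))
        = u ^ D * (Real.exp (-Cstar * (u - m)) * Real.exp (-Cstar * (u - n))) := by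
          rw [mul_assoc, e1]
      _ ≤ (m ^ D * (1 + (u - m)) ^ N) * (Real.exp (-Cstar * (u - m)) * Real.exp (-Cstar * (m - n))) := by
          apply mul_le_mul e3 _ (by positivity) (by positivity)
          exact mul_le_mul_of_nonneg_left e2 hexp_pos.le
      _ ≤ (m ^ D * (A * Real.exp (Cstar / 2 * (u - m)))) * (Real.exp (-Cstar * (u - m)) * Real.exp (-Cstar * (m - n))) := by
          apply mul_le_mul_of_nonneg_right _ (by positivity)
          exact mul_le_mul_of_nonneg_left e4 hmD.le
      _ = A * m ^ D * Real.exp (-Cstar * (m - n)) *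
            (Real.exp (Cstar / 2 * (u - m)) * Real.exp (-Cstar * (u - m))) := by ring
      _ = g u := by rw [e5]
  -- integrability
  have hf_int : IntervalIntegrable
      (fun u => u ^ D * Real.exp (-Cstar * (u - r₁)) * Real.exp (-Cstar * (u - r₂))) MeasureTheory.volume m t := by
    apply ContinuousOn.intervalIntegrable
    apply ContinuousOn.mul
    apply ContinuousOn.mul
    · apply ContinuousOn.rpow_const continuousOn_id
      intro x hx
      rw [Set.uIcc_of_le hmt] at hx
      have h1 : m ≤ x := hx.1
      exact Or.inl (by intro h; simp only [id] at h; rw [h] at h1; linarith)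
    · exact ((continuous_const.mul (continuous_id.sub continuous_const)).rexp).continuousOn
    · exact ((continuous_const.mul (continuous_id.sub continuous_const)).rexp).continuousOn
  have hg_int : IntervalIntegrable g MeasureTheory.volume m t := by
    apply Continuous.intervalIntegrable
    exact continuous_const.mul ((continuous_const.mul (continuous_id.sub continuous_const)).rexp)
  -- compare with dominating integral
  have hmono := intervalIntegral.integral_mono_on hmt hf_int hg_int key
  -- compute ∫ g
  have hderiv : ∀ u ∈ Set.uIcc m t,
      HasDerivAt (fun u => -(2 / Cstar) * Real.exp (-(Cstar / 2) * (u - m)))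
        (Real.exp (-(Cstar / 2) * (u - m))) u := by
    intro u _
    have h1 : HasDerivAt (fun u : ℝ => -(Cstar / 2) * (u - m)) (-(Cstar / 2)) u := by
      simpa using (((hasDerivAt_id u).sub_const m).const_mul (-(Cstar / 2)))
    have h2 := (h1.exp).const_mul (-(2 / Cstar))
    refine h2.congr_deriv ?_
    field_simp
  have hcont : IntervalIntegrable (fun u => Real.exp (-(Cstar / 2) * (u - m)))
      MeasureTheory.volume m t :=
    ((continuous_const.mul (continuous_id.sub continuous_const)).rexp).intervalIntegrable m t
  have hint : (∫ u in m..t, Real.exp (-(Cstar / 2) * (u - m)))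
      = -(2 / Cstar) * Real.exp (-(Cstar / 2) * (t - m)) -
        (-(2 / Cstar) * Real.exp (-(Cstar / 2) * (m - m))) :=
    intervalIntegral.integral_eq_sub_of_hasDerivAt hderiv hcont
  have hint_le : (∫ u in m..t, Real.exp (-(Cstar / 2) * (u - m))) ≤ 2 / Cstar := by
    rw [hint]
    have h1 : Real.exp (-(Cstar / 2) * (m - m)) = 1 := by simp
    have h2 : (0:ℝ) < Real.exp (-(Cstar / 2) * (t - m)) := Real.exp_pos _
    rw [h1]
    nlinarith [div_pos (by norm_num : (0:ℝ) < 2) hC]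
  have hgint : (∫ u in m..t, g u) = A * m ^ D * Real.exp (-Cstar * (m - n)) *
      ∫ u in m..t, Real.exp (-(Cstar / 2) * (u - m)) := by
    rw [hg]
    exact intervalIntegral.integral_const_mul _ _
  calc (∫ u in m..t, u ^ D * Real.exp (-Cstar * (u - r₁)) * Real.exp (-Cstar * (u - r₂)))
      ≤ ∫ u in m..t, g u := hmono
    _ = A * m ^ D * Real.exp (-Cstar * (m - n)) *
        ∫ u in m..t, Real.exp (-(Cstar / 2) * (u - m)) := hgint
    _ ≤ A * m ^ D * Real.exp (-Cstar * (m - n)) * (2 / Cstar) := by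
        apply mul_le_mul_of_nonneg_left hint_le (by positivity)
    _ = A * (2 / Cstar) * m ^ D * Real.exp (-Cstar * (m - n)) := by ring
end

section
/- Let c > 1/2, C* > 0, and t* ≥ 1. There exists a time-independent constant K > 0 such that for all t ≥ t*, the quantity I₁(t) := t^{−4c} · ∫_{u=t*}^{t} ∫_{s=u}^{t} ∫_{w=s}^{t} ∫_{r=w}^{t} r^{2c−2} · s^{c−1} · w^{c−1} · e^{−2C* r + 2C* u} dr dw ds du satisfies: I₁(t) ≤ K/t³ if c > 3/4; I₁(t) ≤ K(1 + log t)/t³ if c = 3/4; and I₁(t) ≤ K/t^{4c} if 1/2 < c < 3/4. -/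
/-- The quantity `I₁(t)` from Lemma 5.3: a fourfold iterated integral over the
ordered region `t* ≤ u ≤ s ≤ w ≤ r ≤ t`, scaled by `t^{-4c}`. -/
noncomputable def I1 (c Cstar tstar t : ℝ) : ℝ :=
  t ^ (-(4 * c)) *
    ∫ u in tstar..t, ∫ s in u..t, ∫ w in s..t, ∫ r in w..t,
      r ^ (2 * c - 2) * s ^ (c - 1) * w ^ (c - 1) *
        Real.exp (-2 * Cstar * r + 2 * Cstar * u)

open MeasureTheory intervalIntegral Set

namespace Lemma53Aux

/-- `x ^ n ≤ n^n * exp x` for `x ≥ 0`. -/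
lemma aux_pow (n : ℕ) (x : ℝ) (hx : 0 ≤ x) : x ^ n ≤ (n : ℝ) ^ n * Real.exp x := by
  rcases Nat.eq_zero_or_pos n with h0 | hpos
  · subst h0; simpa using Real.one_le_exp hx
  · have hn : (0 : ℝ) < n := by exact_mod_cast hpos
    have h2 : x / n ≤ Real.exp (x / n - 1) := by
      have := Real.add_one_le_exp (x / n - 1); linarith
    have h1 : x ≤ n * Real.exp (x / n - 1) := by
      calc x = n * (x / n) := by field_simp
        _ ≤ n * Real.exp (x / n - 1) := by
            exact mul_le_mul_of_nonneg_left h2 hn.le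
    calc x ^ n ≤ ((n : ℝ) * Real.exp (x / n - 1)) ^ n := pow_le_pow_left₀ hx h1 n
      _ = (n : ℝ) ^ n * (Real.exp (x / n - 1)) ^ n := mul_pow _ _ _
      _ = (n : ℝ) ^ n * Real.exp (n * (x / n - 1)) := by rw [Real.exp_nat_mul]
      _ = (n : ℝ) ^ n * Real.exp (x - n) := by
          rw [show (n : ℝ) * (x / n - 1) = x - n by field_simp]
      _ ≤ (n : ℝ) ^ n * Real.exp x := by
          have := Real.exp_le_exp.mpr (show x - n ≤ x by linarith)
          exact mul_le_mul_of_nonneg_left this (by positivity)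

/-- Key growth bound: `y^a ≤ A * x^a * exp (η (y - x))` for `1 ≤ x ≤ y`. -/
lemma key (a η : ℝ) (hη : 0 < η) :
    ∃ A : ℝ, 0 < A ∧ ∀ x y : ℝ, 1 ≤ x → x ≤ y →
      y ^ a ≤ A * (x ^ a * Real.exp (η * (y - x))) := by
  rcases le_or_gt a 0 with ha | ha
  · refine ⟨1, one_pos, fun x y hx hxy => ?_⟩
    have hx0 : (0 : ℝ) < x := lt_of_lt_of_le one_pos hx
    have h1 : y ^ a ≤ x ^ a := Real.rpow_le_rpow_of_nonpos hx0 hxy ha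
    have h2 : 1 ≤ Real.exp (η * (y - x)) := Real.one_le_exp (by nlinarith)
    have h3 : (0 : ℝ) ≤ x ^ a := Real.rpow_nonneg hx0.le a
    nlinarith
  · set n := ⌈a⌉₊ with hn
    have hna : a ≤ (n : ℝ) := Nat.le_ceil a
    have hn1 : 0 < n := Nat.ceil_pos.mpr ha
    have hnR : (0 : ℝ) < n := by exact_mod_cast hn1
    have hηn : (0 : ℝ) < η ^ n := pow_pos hη n
    refine ⟨(n : ℝ) ^ n / η ^ n * Real.exp η, by positivity, fun x y hx hxy => ?_⟩
    have hx0 : (0 : ℝ) < x := lt_of_lt_of_le one_pos hx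
    have hy0 : (0 : ℝ) < y := lt_of_lt_of_le hx0 hxy
    have hz : 0 ≤ y - x := by linarith
    have s1 : y ^ a ≤ (x * (1 + (y - x))) ^ a := by
      apply Real.rpow_le_rpow hy0.le _ ha.le
      nlinarith
    have s1' : (x * (1 + (y - x))) ^ a = x ^ a * (1 + (y - x)) ^ a :=
      Real.mul_rpow hx0.le (by linarith)
    have s2 : (1 + (y - x)) ^ a ≤ (1 + (y - x)) ^ (n : ℝ) :=
      Real.rpow_le_rpow_of_exponent_le (by linarith) hna
    have s2' : (1 + (y - x)) ^ (n : ℝ) = (1 + (y - x)) ^ n := Real.rpow_natCast _ n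
    have s3 : (1 + (y - x)) ^ n ≤ (n : ℝ) ^ n / η ^ n * Real.exp η * Real.exp (η * (y - x)) := by
      have h := aux_pow n (η * (1 + (y - x))) (by nlinarith)
      rw [mul_pow] at h
      rw [show Real.exp (η * (1 + (y - x))) = Real.exp η * Real.exp (η * (y - x)) by
        rw [← Real.exp_add]; congr 1; ring] at h
      rw [show (n : ℝ) ^ n / η ^ n * Real.exp η * Real.exp (η * (y - x))
          = ((n : ℝ) ^ n * Real.exp η * Real.exp (η * (y - x))) / η ^ n by ring,
        le_div_iff₀ hηn]
      nlinarith
    have hxa : (0 : ℝ) ≤ x ^ a := Real.rpow_nonneg hx0.le a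
    calc y ^ a ≤ x ^ a * (1 + (y - x)) ^ a := by rw [← s1']; exact s1
      _ ≤ x ^ a * ((n : ℝ) ^ n / η ^ n * Real.exp η * Real.exp (η * (y - x))) := by
          apply mul_le_mul_of_nonneg_left _ hxa
          calc (1 + (y - x)) ^ a ≤ (1 + (y - x)) ^ (n : ℝ) := s2
            _ = (1 + (y - x)) ^ n := s2'
            _ ≤ _ := s3
      _ = (n : ℝ) ^ n / η ^ n * Real.exp η * (x ^ a * Real.exp (η * (y - x))) := by ring

/-- Continuity of `r ↦ r^a * exp (-(δ r))` on sets of positive reals. -/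
lemma contOn_pow_exp (a δ : ℝ) {s : Set ℝ} (hs : ∀ x ∈ s, (0 : ℝ) < x) :
    ContinuousOn (fun r : ℝ => r ^ a * Real.exp (-(δ * r))) s := by
  apply ContinuousOn.mul
  · exact ContinuousOn.rpow_const continuousOn_id fun x hx => Or.inl (ne_of_gt (hs x hx))
  · exact (Real.continuous_exp.comp (by continuity)).continuousOn

lemma exp_int_le {η w t : ℝ} (hη : 0 < η) (hwt : w ≤ t) :
    (∫ r in w..t, Real.exp (-(η * (r - w)))) ≤ 1 / η := by
  have hd : ∀ x : ℝ, HasDerivAt (fun r => -(1 / η) * Real.exp (-(η * (r - w))))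
      (Real.exp (-(η * (x - w)))) x := by
    intro x
    have h1 : HasDerivAt (fun r : ℝ => -(η * (r - w))) (-η) x := by
      have h := ((hasDerivAt_id x).sub_const w).const_mul (-η)
      simp only [id_eq, mul_one] at h
      convert h using 2 with r
      · rfl
      · rfl
      ring
    have h3 := (h1.exp).const_mul (-(1 / η))
    convert h3 using 1
    · rfl
    · rfl
    field_simp
  rw [intervalIntegral.integral_eq_sub_of_hasDerivAt (fun x _ => hd x)
    ((Real.continuous_exp.comp (by continuity)).intervalIntegrable w t)]
  have h1 := Real.exp_pos (-(η * (t - w)))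
  have h2 : Real.exp (-(η * (w - w))) = 1 := by simp
  rw [h2]
  have h3 : 0 < 1 / η := by positivity
  nlinarith

/-- Integrability helper. -/
lemma II {f : ℝ → ℝ} {l t s : ℝ} (hf : ContinuousOn f (Set.Icc l t)) (hls : l ≤ s)
    (hst : s ≤ t) : IntervalIntegrable f MeasureTheory.volume s t :=
  ContinuousOn.intervalIntegrable_of_Icc hst (hf.mono (Set.Icc_subset_Icc_left hls))

/-- Main step estimate: `∫_w^t r^a e^{-δ r} dr ≤ B w^a e^{-δ w}`. -/
lemma step (a δ : ℝ) (hδ : 0 < δ) :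
    ∃ B : ℝ, 0 < B ∧ ∀ w t : ℝ, 1 ≤ w → w ≤ t →
      (∫ r in w..t, r ^ a * Real.exp (-(δ * r))) ≤ B * (w ^ a * Real.exp (-(δ * w))) := by
  obtain ⟨A, hA, hkey⟩ := key a (δ / 2) (by positivity)
  refine ⟨A * (1 / (δ / 2)), by positivity, fun w t h1w hwt => ?_⟩
  have hw0 : (0 : ℝ) < w := lt_of_lt_of_le one_pos h1w
  have hwa : (0 : ℝ) ≤ w ^ a := Real.rpow_nonneg hw0.le a
  calc (∫ r in w..t, r ^ a * Real.exp (-(δ * r)))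
      ≤ ∫ r in w..t, (A * (w ^ a * Real.exp (-(δ * w)))) * Real.exp (-(δ / 2 * (r - w))) := by
        apply intervalIntegral.integral_mono_on hwt
        · exact II (contOn_pow_exp a δ fun x hx => lt_of_lt_of_le hw0 hx.1) le_rfl hwt
        · exact (continuous_const.mul (Real.continuous_exp.comp (by continuity))).intervalIntegrable w t
        · intro r hr
          have h1 : r ^ a ≤ A * (w ^ a * Real.exp (δ / 2 * (r - w))) := hkey w r h1w hr.1
          have h2 : r ^ a * Real.exp (-(δ * r))
              ≤ (A * (w ^ a * Real.exp (δ / 2 * (r - w)))) * Real.exp (-(δ * r)) :=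
            mul_le_mul_of_nonneg_right h1 (Real.exp_pos _).le
          refine h2.trans_eq ?_
          have hee : Real.exp (δ / 2 * (r - w)) * Real.exp (-(δ * r))
              = Real.exp (-(δ * w)) * Real.exp (-(δ / 2 * (r - w))) := by
            rw [← Real.exp_add, ← Real.exp_add]; congr 1; ring
          linear_combination A * w ^ a * hee
    _ = (A * (w ^ a * Real.exp (-(δ * w)))) * ∫ r in w..t, Real.exp (-(δ / 2 * (r - w))) :=
        intervalIntegral.integral_const_mul _ _
    _ ≤ (A * (w ^ a * Real.exp (-(δ * w)))) * (1 / (δ / 2)) := by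
        apply mul_le_mul_of_nonneg_left (exp_int_le (by positivity) hwt) (by positivity)
    _ = (A * (1 / (δ / 2))) * (w ^ a * Real.exp (-(δ * w))) := by ring

/-- Primitive of a continuous function is continuous. -/
lemma prim_contOn {f : ℝ → ℝ} {l t : ℝ} (h2 : l ≤ t) (hf : ContinuousOn f (Set.Icc l t)) :
    ContinuousOn (fun x => ∫ r in x..t, f r) (Set.Icc l t) := by
  have h := continuousOn_primitive_interval_left (μ := volume) (a := l) (b := t) (f := f)
    (by rw [Set.uIcc_of_le h2]; exact hf.integrableOn_Icc)
  rwa [Set.uIcc_of_le h2] at h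

noncomputable def Faux (c d t : ℝ) : ℝ → ℝ :=
  fun x => ∫ r in x..t, r ^ (2 * c - 2) * Real.exp (-(d * r))

noncomputable def Gaux (c d t : ℝ) : ℝ → ℝ :=
  fun x => ∫ w in x..t, w ^ (c - 1) * Faux c d t w

noncomputable def Haux (c d t : ℝ) : ℝ → ℝ :=
  fun x => ∫ s in x..t, s ^ (c - 1) * Gaux c d t s

lemma inner_eq (c d t u s w : ℝ) :
    (∫ r in w..t, r ^ (2 * c - 2) * s ^ (c - 1) * w ^ (c - 1) * Real.exp (-(d * r) + d * u))
      = (s ^ (c - 1) * Real.exp (d * u)) * (w ^ (c - 1) * Faux c d t w) := by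
  simp only [Faux]
  rw [show (fun r : ℝ => r ^ (2 * c - 2) * s ^ (c - 1) * w ^ (c - 1)
      * Real.exp (-(d * r) + d * u))
    = fun r : ℝ => (s ^ (c - 1) * Real.exp (d * u) * w ^ (c - 1))
      * (r ^ (2 * c - 2) * Real.exp (-(d * r))) from funext fun r => by
        rw [Real.exp_add]; ring]
  rw [intervalIntegral.integral_const_mul, ← intervalIntegral.integral_const_mul]
  rw [intervalIntegral.integral_const_mul]
  ring

lemma mid_eq (c d t u s : ℝ) :
    (∫ w in s..t, (s ^ (c - 1) * Real.exp (d * u)) * (w ^ (c - 1) * Faux c d t w))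
      = Real.exp (d * u) * (s ^ (c - 1) * Gaux c d t s) := by
  simp only [Gaux]
  rw [intervalIntegral.integral_const_mul]
  ring

lemma P_eq (c d tstar t : ℝ) :
    (∫ u in tstar..t, ∫ s in u..t, ∫ w in s..t, ∫ r in w..t,
        r ^ (2 * c - 2) * s ^ (c - 1) * w ^ (c - 1) * Real.exp (-(d * r) + d * u))
      = ∫ u in tstar..t, Real.exp (d * u) * Haux c d t u := by
  simp only [Haux]
  simp_rw [inner_eq, mid_eq, intervalIntegral.integral_const_mul]

end Lemma53Aux

open Lemma53Aux

/-- Lemma 5.3 of the paper. -/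
theorem stmt_1 (c Cstar tstar : ℝ) (hc : 1 / 2 < c) (hC : 0 < Cstar)
    (htstar : 1 ≤ tstar) :
    ∃ K : ℝ, 0 < K ∧ ∀ t : ℝ, tstar ≤ t →
      (3 / 4 < c → I1 c Cstar tstar t ≤ K / t ^ 3) ∧
      (c = 3 / 4 → I1 c Cstar tstar t ≤ K * (1 + Real.log t) / t ^ 3) ∧
      (c < 3 / 4 → I1 c Cstar tstar t ≤ K / t ^ (4 * c)) := by
  set d : ℝ := 2 * Cstar with hd
  have hd0 : 0 < d := by positivity
  obtain ⟨B₁, hB₁, hstep₁⟩ := step (2 * c - 2) d hd0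
  obtain ⟨B₂, hB₂, hstep₂⟩ := step (3 * c - 3) d hd0
  obtain ⟨B₃, hB₃, hstep₃⟩ := step (4 * c - 4) d hd0
  set B : ℝ := B₁ * B₂ * B₃ with hB
  have hB0 : 0 < B := by positivity
  refine ⟨B * (1 + |4 * c - 3|⁻¹), by positivity, fun t ht => ?_⟩
  have ht1 : (1 : ℝ) ≤ t := le_trans htstar ht
  have ht0 : (0 : ℝ) < t := lt_of_lt_of_le one_pos ht1
  have hts0 : (0 : ℝ) < tstar := lt_of_lt_of_le one_pos htstar
  -- continuity chain
  have hpos : ∀ x ∈ Set.Icc tstar t, (0 : ℝ) < x := fun x hx => lt_of_lt_of_le hts0 hx.1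
  have hφc : ContinuousOn (fun r : ℝ => r ^ (2 * c - 2) * Real.exp (-(d * r)))
      (Set.Icc tstar t) := contOn_pow_exp _ _ hpos
  have hFc : ContinuousOn (Faux c d t) (Set.Icc tstar t) := prim_contOn ht hφc
  have hψc : ContinuousOn (fun w : ℝ => w ^ (c - 1) * Faux c d t w) (Set.Icc tstar t) := by
    apply ContinuousOn.mul _ hFc
    exact ContinuousOn.rpow_const continuousOn_id fun x hx => Or.inl (ne_of_gt (hpos x hx))
  have hGc : ContinuousOn (Gaux c d t) (Set.Icc tstar t) := prim_contOn ht hψc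
  have hχc : ContinuousOn (fun s : ℝ => s ^ (c - 1) * Gaux c d t s) (Set.Icc tstar t) := by
    apply ContinuousOn.mul _ hGc
    exact ContinuousOn.rpow_const continuousOn_id fun x hx => Or.inl (ne_of_gt (hpos x hx))
  have hHc : ContinuousOn (Haux c d t) (Set.Icc tstar t) := prim_contOn ht hχc
  -- pointwise bounds
  have hψb : ∀ w ∈ Set.Icc tstar t, w ^ (c - 1) * Faux c d t w
      ≤ B₁ * (w ^ (3 * c - 3) * Real.exp (-(d * w))) := by
    intro w hw
    have h1w : (1 : ℝ) ≤ w := le_trans htstar hw.1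
    have hw0 : (0 : ℝ) < w := lt_of_lt_of_le one_pos h1w
    have h := hstep₁ w t h1w hw.2
    have h2 : w ^ (c - 1) * Faux c d t w
        ≤ w ^ (c - 1) * (B₁ * (w ^ (2 * c - 2) * Real.exp (-(d * w)))) :=
      mul_le_mul_of_nonneg_left h (Real.rpow_nonneg hw0.le _)
    refine h2.trans_eq ?_
    have : w ^ (c - 1) * w ^ (2 * c - 2) = w ^ (3 * c - 3) := by
      rw [← Real.rpow_add hw0]; congr 1; ring
    linear_combination B₁ * Real.exp (-(d * w)) * this
  have hGb : ∀ s ∈ Set.Icc tstar t, Gaux c d t s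
      ≤ (B₁ * B₂) * (s ^ (3 * c - 3) * Real.exp (-(d * s))) := by
    intro s hs
    have h1s : (1 : ℝ) ≤ s := le_trans htstar hs.1
    have hcalc : Gaux c d t s ≤ ∫ w in s..t, B₁ * (w ^ (3 * c - 3) * Real.exp (-(d * w))) := by
      apply intervalIntegral.integral_mono_on hs.2
      · exact II hψc hs.1 hs.2
      · exact II (continuousOn_const.mul (contOn_pow_exp (3 * c - 3) d hpos)) hs.1 hs.2
      · intro w hw
        exact hψb w ⟨le_trans hs.1 hw.1, hw.2⟩
    rw [intervalIntegral.integral_const_mul] at hcalc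
    calc Gaux c d t s ≤ B₁ * ∫ w in s..t, w ^ (3 * c - 3) * Real.exp (-(d * w)) := hcalc
      _ ≤ B₁ * (B₂ * (s ^ (3 * c - 3) * Real.exp (-(d * s)))) :=
          mul_le_mul_of_nonneg_left (hstep₂ s t h1s hs.2) hB₁.le
      _ = (B₁ * B₂) * (s ^ (3 * c - 3) * Real.exp (-(d * s))) := by ring
  have hχb : ∀ s ∈ Set.Icc tstar t, s ^ (c - 1) * Gaux c d t s
      ≤ (B₁ * B₂) * (s ^ (4 * c - 4) * Real.exp (-(d * s))) := by
    intro s hs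
    have h1s : (1 : ℝ) ≤ s := le_trans htstar hs.1
    have hs0 : (0 : ℝ) < s := lt_of_lt_of_le one_pos h1s
    have h2 : s ^ (c - 1) * Gaux c d t s
        ≤ s ^ (c - 1) * ((B₁ * B₂) * (s ^ (3 * c - 3) * Real.exp (-(d * s)))) :=
      mul_le_mul_of_nonneg_left (hGb s hs) (Real.rpow_nonneg hs0.le _)
    refine h2.trans_eq ?_
    have : s ^ (c - 1) * s ^ (3 * c - 3) = s ^ (4 * c - 4) := by
      rw [← Real.rpow_add hs0]; congr 1; ring
    linear_combination (B₁ * B₂) * Real.exp (-(d * s)) * this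
  have hHb : ∀ u ∈ Set.Icc tstar t, Haux c d t u
      ≤ B * (u ^ (4 * c - 4) * Real.exp (-(d * u))) := by
    intro u hu
    have h1u : (1 : ℝ) ≤ u := le_trans htstar hu.1
    have hcalc : Haux c d t u
        ≤ ∫ s in u..t, (B₁ * B₂) * (s ^ (4 * c - 4) * Real.exp (-(d * s))) := by
      apply intervalIntegral.integral_mono_on hu.2
      · exact II hχc hu.1 hu.2
      · exact II (continuousOn_const.mul (contOn_pow_exp (4 * c - 4) d hpos)) hu.1 hu.2
      · intro s hs
        exact hχb s ⟨le_trans hu.1 hs.1, hs.2⟩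
    rw [intervalIntegral.integral_const_mul] at hcalc
    calc Haux c d t u ≤ (B₁ * B₂) * ∫ s in u..t, s ^ (4 * c - 4) * Real.exp (-(d * s)) := hcalc
      _ ≤ (B₁ * B₂) * (B₃ * (u ^ (4 * c - 4) * Real.exp (-(d * u)))) :=
          mul_le_mul_of_nonneg_left (hstep₃ u t h1u hu.2) (by positivity)
      _ = B * (u ^ (4 * c - 4) * Real.exp (-(d * u))) := by rw [hB]; ring
  -- the main integral bound
  have hPle : (∫ u in tstar..t, Real.exp (d * u) * Haux c d t u)
      ≤ B * ∫ u in tstar..t, u ^ (4 * c - 4) := by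
    have h1 : (∫ u in tstar..t, Real.exp (d * u) * Haux c d t u)
        ≤ ∫ u in tstar..t, B * u ^ (4 * c - 4) := by
      apply intervalIntegral.integral_mono_on ht
      · apply ContinuousOn.intervalIntegrable_of_Icc ht
        exact ((Real.continuous_exp.comp (by continuity)).continuousOn).mul hHc
      · apply ContinuousOn.intervalIntegrable_of_Icc ht
        exact continuousOn_const.mul (ContinuousOn.rpow_const continuousOn_id
          fun x hx => Or.inl (ne_of_gt (hpos x hx)))
      · intro u hu
        have h2 := mul_le_mul_of_nonneg_left (hHb u hu) (Real.exp_pos (d * u)).le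
        refine h2.trans_eq ?_
        have h3 : Real.exp (d * u) * Real.exp (-(d * u)) = 1 := by
          rw [← Real.exp_add]; simp
        linear_combination B * u ^ (4 * c - 4) * h3
    rwa [intervalIntegral.integral_const_mul] at h1
  -- rewrite I1
  have hI1 : I1 c Cstar tstar t
      = t ^ (-(4 * c)) * ∫ u in tstar..t, Real.exp (d * u) * Haux c d t u := by
    rw [I1]
    congr 1
    rw [← P_eq c d tstar t]
    simp_rw [show ∀ r u : ℝ, (-2 * Cstar * r + 2 * Cstar * u) = (-(d * r) + d * u) from
      fun r u => by rw [hd]; ring]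
  have htp : (0 : ℝ) < t ^ (-(4 * c)) := Real.rpow_pos_of_pos ht0 _
  have hIle : I1 c Cstar tstar t
      ≤ t ^ (-(4 * c)) * (B * ∫ u in tstar..t, u ^ (4 * c - 4)) := by
    rw [hI1]
    exact mul_le_mul_of_nonneg_left hPle htp.le
  have hzero : (0 : ℝ) ∉ Set.uIcc tstar t := by
    rw [Set.uIcc_of_le ht]
    intro h
    exact absurd h.1 (by linarith)
  have ht3 : t ^ (-(3 : ℝ)) = (t ^ 3)⁻¹ := by
    rw [Real.rpow_neg ht0.le, show (3 : ℝ) = ((3 : ℕ) : ℝ) by norm_num, Real.rpow_natCast]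
  have ht3pos : (0 : ℝ) < t ^ 3 := by positivity
  refine ⟨?_, ?_, ?_⟩
  · -- case c > 3/4
    intro hcase
    have h43 : (0 : ℝ) < 4 * c - 3 := by linarith
    have hQle : (∫ u in tstar..t, u ^ (4 * c - 4)) ≤ t ^ (4 * c - 3) / (4 * c - 3) := by
      rw [integral_rpow (Or.inl (by linarith : (-1 : ℝ) < 4 * c - 4)),
        show 4 * c - 4 + 1 = 4 * c - 3 by ring]
      have h1 := Real.rpow_nonneg hts0.le (4 * c - 3)
      gcongr
      linarith
    calc I1 c Cstar tstar t
        ≤ t ^ (-(4 * c)) * (B * ∫ u in tstar..t, u ^ (4 * c - 4)) := hIle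
      _ ≤ t ^ (-(4 * c)) * (B * (t ^ (4 * c - 3) / (4 * c - 3))) :=
          mul_le_mul_of_nonneg_left (mul_le_mul_of_nonneg_left hQle hB0.le) htp.le
      _ = (B / (4 * c - 3)) * (t ^ (-(4 * c)) * t ^ (4 * c - 3)) := by ring
      _ = (B / (4 * c - 3)) * (t ^ 3)⁻¹ := by
          rw [← Real.rpow_add ht0, show -(4 * c) + (4 * c - 3) = -(3 : ℝ) by ring, ht3]
      _ ≤ (B * (1 + |4 * c - 3|⁻¹)) * (t ^ 3)⁻¹ := by
          apply mul_le_mul_of_nonneg_right _ (inv_nonneg.mpr ht3pos.le)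
          rw [abs_of_pos h43, div_eq_mul_inv]
          have h2 : (0 : ℝ) < (4 * c - 3)⁻¹ := inv_pos.mpr h43
          nlinarith
      _ = (B * (1 + |4 * c - 3|⁻¹)) / t ^ 3 := by rw [div_eq_mul_inv]
  · -- case c = 3/4
    intro hcase
    have he : (4 * c - 4 : ℝ) = -1 := by rw [hcase]; norm_num
    have h4c : (4 * c : ℝ) = 3 := by rw [hcase]; norm_num
    have hlog0 : 0 ≤ Real.log tstar := Real.log_nonneg htstar
    have hlogt : 0 ≤ Real.log t := Real.log_nonneg ht1
    have hQle : (∫ u in tstar..t, u ^ (4 * c - 4)) ≤ 1 + Real.log t := by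
      rw [he]
      simp_rw [Real.rpow_neg_one]
      rw [integral_inv hzero, Real.log_div (ne_of_gt ht0) (ne_of_gt hts0)]
      linarith
    have hKB : B ≤ B * (1 + |4 * c - 3|⁻¹) := by
      nlinarith [mul_nonneg hB0.le (inv_nonneg.mpr (abs_nonneg (4 * c - 3)))]
    calc I1 c Cstar tstar t
        ≤ t ^ (-(4 * c)) * (B * ∫ u in tstar..t, u ^ (4 * c - 4)) := hIle
      _ ≤ t ^ (-(4 * c)) * (B * (1 + Real.log t)) :=
          mul_le_mul_of_nonneg_left (mul_le_mul_of_nonneg_left hQle hB0.le) htp.le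
      _ = (B * (1 + Real.log t)) * t ^ (-(4 * c)) := by ring
      _ = (B * (1 + Real.log t)) * (t ^ 3)⁻¹ := by rw [h4c, ht3]
      _ ≤ ((B * (1 + |4 * c - 3|⁻¹)) * (1 + Real.log t)) * (t ^ 3)⁻¹ := by
          apply mul_le_mul_of_nonneg_right _ (inv_nonneg.mpr ht3pos.le)
          exact mul_le_mul_of_nonneg_right hKB (by linarith)
      _ = (B * (1 + |4 * c - 3|⁻¹)) * (1 + Real.log t) / t ^ 3 := by rw [div_eq_mul_inv]
  · -- case c < 3/4
    intro hcase
    have h34 : (4 * c - 3 : ℝ) < 0 := by linarith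
    have hne : (4 * c - 4 : ℝ) ≠ -1 := by intro h; linarith
    have hQle : (∫ u in tstar..t, u ^ (4 * c - 4)) ≤ (3 - 4 * c)⁻¹ := by
      rw [integral_rpow (Or.inr ⟨hne, hzero⟩), show 4 * c - 4 + 1 = 4 * c - 3 by ring,
        div_le_iff_of_neg h34]
      have h1 : tstar ^ (4 * c - 3) ≤ 1 :=
        Real.rpow_le_one_of_one_le_of_nonpos htstar h34.le
      have h2 : (0 : ℝ) ≤ t ^ (4 * c - 3) := Real.rpow_nonneg ht0.le _
      have h4 : (3 - 4 * c) ≠ 0 := by intro h; apply hne; linarith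
      have h3 : (3 - 4 * c)⁻¹ * (4 * c - 3) = -1 := by field_simp; ring
      rw [h3]
      linarith
    have habs : |4 * c - 3|⁻¹ = (3 - 4 * c)⁻¹ := by
      rw [abs_of_neg h34, show -(4 * c - 3) = 3 - 4 * c by ring]
    calc I1 c Cstar tstar t
        ≤ t ^ (-(4 * c)) * (B * ∫ u in tstar..t, u ^ (4 * c - 4)) := hIle
      _ ≤ t ^ (-(4 * c)) * (B * (3 - 4 * c)⁻¹) :=
          mul_le_mul_of_nonneg_left (mul_le_mul_of_nonneg_left hQle hB0.le) htp.le
      _ = (B * (3 - 4 * c)⁻¹) * t ^ (-(4 * c)) := by ring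
      _ ≤ (B * (1 + |4 * c - 3|⁻¹)) * t ^ (-(4 * c)) := by
          apply mul_le_mul_of_nonneg_right _ htp.le
          rw [habs]
          have h5 : (0 : ℝ) < (3 - 4 * c)⁻¹ := inv_pos.mpr (by linarith)
          nlinarith
      _ = (B * (1 + |4 * c - 3|⁻¹)) / t ^ (4 * c) := by
          rw [Real.rpow_neg ht0.le, div_eq_mul_inv]
end
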